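/- Let m1, m2 be positive integers with m2 even. For every function f : I(m) → ℂ there exists a unique function P in the span of {X_γ : γ ∈ Γ(m)} such that P(i1π/m1, i2π/m2) = f(i) for all i = (i1,i2) ∈ I(m). -/

import Mathlib

open Real Complex

/-- The index set I(m) as a finset. -/
def indexSet (m1 m2 : ℕ) : Finset (ℕ × ℕ) :=
  (Finset.range (m1 + 1) ×ˢ Finset.range (2 * m2)).filter
    (fun i => ((i.1 = 0 ∨ i.1 = m1) → i.2 < m2) ∧ Even (i.1 + i.2))

/-- The spectral index set Γ(m), with denominators cleared. -/
noncomputable def GammaSet (m1 m2 : ℕ) : Finset (ℤ × ℤ) :=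
  ((Finset.Icc (0 : ℤ) m1) ×ˢ (Finset.Icc (-(m2 : ℤ)) m2)).filter
    (fun γ => ((1 ≤ γ.1 ∧ (m2 : ℤ) * γ.1 + (m1 : ℤ) * |γ.2| ≤ m1 * m2) ∨
        (γ.1 = 0 ∧ Even γ.2 ∧ |γ.2| < (m2 : ℤ))) ∧
      ¬((m2 : ℤ) * γ.1 + (m1 : ℤ) * γ.2 = m1 * m2 ∧ γ.2 ≠ 0))

/-- The parity-modified double Fourier basis functions X_γ. -/
noncomputable def Xbasis (γ : ℤ × ℤ) (θ φ : ℝ) : ℂ :=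
  if Even γ.2 then
    (Real.cos (γ.1 * θ) : ℂ) * Complex.exp (Complex.I * γ.2 * φ)
  else
    Complex.I * (Real.sin (γ.1 * θ) : ℂ) * Complex.exp (Complex.I * γ.2 * φ)

/-! ### Auxiliary development -/

lemma sum_exp_root (m : ℕ) (hm : 0 < m) (a : ℤ) :
    ∑ j ∈ Finset.range (2*m), Complex.exp (π * Complex.I * a * j / m) =
      if (2*(m:ℤ)) ∣ a then ((2*m : ℕ) : ℂ) else 0 := by
  have hm' : (m:ℂ) ≠ 0 := by exact_mod_cast hm.ne'
  have hπ : (π:ℂ) ≠ 0 := by exact_mod_cast Real.pi_ne_zero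
  have hI : Complex.I ≠ 0 := Complex.I_ne_zero
  set z : ℂ := Complex.exp (π * Complex.I * a / m) with hz
  have hzj : ∀ j : ℕ, Complex.exp (π * Complex.I * a * j / m) = z ^ j := by
    intro j
    rw [hz, ← Complex.exp_nat_mul]
    ring_nf
  have hz2m : z ^ (2*m) = 1 := by
    rw [hz, ← Complex.exp_nat_mul, Complex.exp_eq_one_iff]
    refine ⟨a, ?_⟩
    push_cast
    field_simp
  have hz1 : z = 1 ↔ (2*(m:ℤ)) ∣ a := by
    rw [hz, Complex.exp_eq_one_iff]
    constructor
    · rintro ⟨n, hn⟩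
      refine ⟨n, ?_⟩
      field_simp at hn
      have h2 : (a : ℂ) = 2 * m * n := by
        have hmul : (π:ℂ) * Complex.I ≠ 0 := mul_ne_zero hπ hI
        apply mul_left_cancel₀ hmul
        rw [show (π:ℂ) * Complex.I * (2*m*n) = n * (2*π*Complex.I) * m by ring]
        linear_combination (π * Complex.I) * hn
      exact_mod_cast h2
    · rintro ⟨n, rfl⟩
      refine ⟨n, ?_⟩
      push_cast
      field_simp
  simp only [hzj]
  by_cases hd : (2*(m:ℤ)) ∣ a
  · rw [if_pos hd]
    have : z = 1 := hz1.mpr hd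
    simp [this]
  · rw [if_neg hd]
    have hzne : z ≠ 1 := fun h => hd (hz1.mp h)
    rw [geom_sum_eq hzne, hz2m]
    simp

noncomputable def Ee (m1 m2 : ℕ) (a b : ℤ) (p : ℕ × ℕ) : ℂ :=
  Complex.exp (π * Complex.I * a * p.1 / m1) * Complex.exp (π * Complex.I * b * p.2 / m2)

def gridL (m1 m2 : ℕ) : Finset (ℕ × ℕ) :=
  (Finset.range (2*m1) ×ˢ Finset.range (2*m2)).filter (fun p => Even (p.1 + p.2))

lemma sum_full (m1 m2 : ℕ) (hm1 : 0 < m1) (hm2 : 0 < m2) (a b : ℤ) :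
    ∑ p ∈ Finset.range (2*m1) ×ˢ Finset.range (2*m2), Ee m1 m2 a b p =
      (if (2*(m1:ℤ)) ∣ a then ((2*m1 : ℕ) : ℂ) else 0) *
      (if (2*(m2:ℤ)) ∣ b then ((2*m2 : ℕ) : ℂ) else 0) := by
  rw [Finset.sum_product]
  simp only [Ee]
  rw [← Finset.sum_mul_sum, sum_exp_root m1 hm1 a, sum_exp_root m2 hm2 b]

lemma Ee_shift (m1 m2 : ℕ) (hm1 : 0 < m1) (hm2 : 0 < m2) (a b : ℤ) (p : ℕ × ℕ) :
    Ee m1 m2 (a + m1) (b + m2) p = Ee m1 m2 a b p * (-1 : ℂ) ^ (p.1 + p.2) := by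
  have hm1' : (m1:ℂ) ≠ 0 := by exact_mod_cast hm1.ne'
  have hm2' : (m2:ℂ) ≠ 0 := by exact_mod_cast hm2.ne'
  have key : ∀ (m : ℕ), (m:ℂ) ≠ 0 → ∀ (c : ℤ) (j : ℕ),
      Complex.exp (π * Complex.I * ((c:ℂ) + m) * j / m) =
        Complex.exp (π * Complex.I * c * j / m) * (-1:ℂ)^j := by
    intro m hm c j
    rw [show (π * Complex.I * ((c:ℂ) + m) * j / m : ℂ) = π * Complex.I * c * j / m + j * (π * Complex.I) by field_simp]
    rw [Complex.exp_add]
    congr 1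
    rw [show ((j:ℂ) * (π * Complex.I)) = ((j:ℕ):ℂ) * (π * Complex.I) by norm_cast]
    rw [Complex.exp_nat_mul, Complex.exp_pi_mul_I]
  simp only [Ee]
  push_cast
  rw [key m1 hm1' a p.1, key m2 hm2' b p.2, pow_add]
  ring

lemma sum_gridL (m1 m2 : ℕ) (hm1 : 0 < m1) (hm2 : 0 < m2) (a b : ℤ) :
    ∑ p ∈ gridL m1 m2, Ee m1 m2 a b p =
      if ((2*(m1:ℤ)) ∣ a ∧ (2*(m2:ℤ)) ∣ b) ∨ ((2*(m1:ℤ)) ∣ (a - m1) ∧ (2*(m2:ℤ)) ∣ (b - m2))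
      then (2*m1*m2 : ℕ) else 0 := by
  have key : (2 : ℂ) * ∑ p ∈ gridL m1 m2, Ee m1 m2 a b p =
      ∑ p ∈ Finset.range (2*m1) ×ˢ Finset.range (2*m2),
        (Ee m1 m2 a b p + Ee m1 m2 (a + m1) (b + m2) p) := by
    rw [← Finset.sum_filter_add_sum_filter_not (Finset.range (2*m1) ×ˢ Finset.range (2*m2))
      (fun p => Even (p.1 + p.2))]
    have h1 : ∀ p ∈ (Finset.range (2*m1) ×ˢ Finset.range (2*m2)).filter (fun p => Even (p.1 + p.2)),
        Ee m1 m2 a b p + Ee m1 m2 (a + m1) (b + m2) p = 2 * Ee m1 m2 a b p := by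
      intro p hp
      simp only [Finset.mem_filter] at hp
      rw [Ee_shift m1 m2 hm1 hm2, (Even.neg_one_pow hp.2)]
      ring
    have h2 : ∀ p ∈ (Finset.range (2*m1) ×ˢ Finset.range (2*m2)).filter (fun p => ¬ Even (p.1 + p.2)),
        Ee m1 m2 a b p + Ee m1 m2 (a + m1) (b + m2) p = 0 := by
      intro p hp
      simp only [Finset.mem_filter] at hp
      rw [Ee_shift m1 m2 hm1 hm2, (Odd.neg_one_pow (Nat.not_even_iff_odd.mp hp.2))]
      ring
    rw [Finset.sum_congr rfl h1, Finset.sum_congr rfl h2, Finset.sum_const_zero, add_zero,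
      ← Finset.mul_sum]
    rfl
  have key2 : (2:ℂ) * ∑ p ∈ gridL m1 m2, Ee m1 m2 a b p =
      (if (2*(m1:ℤ)) ∣ a then ((2*m1 : ℕ) : ℂ) else 0) * (if (2*(m2:ℤ)) ∣ b then ((2*m2 : ℕ) : ℂ) else 0)
      + (if (2*(m1:ℤ)) ∣ (a + m1) then ((2*m1 : ℕ) : ℂ) else 0) * (if (2*(m2:ℤ)) ∣ (b + m2) then ((2*m2 : ℕ) : ℂ) else 0) := by
    rw [key, Finset.sum_add_distrib, sum_full m1 m2 hm1 hm2, sum_full m1 m2 hm1 hm2]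
  have hd1 : (2*(m1:ℤ)) ∣ (a + m1) ↔ (2*(m1:ℤ)) ∣ (a - m1) := by
    constructor <;> intro h
    · have := dvd_sub h (dvd_refl (2*(m1:ℤ)))
      rwa [show a + (m1:ℤ) - 2*m1 = a - m1 by ring] at this
    · have := dvd_add h (dvd_refl (2*(m1:ℤ)))
      rwa [show a - (m1:ℤ) + 2*m1 = a + m1 by ring] at this
  have hd2 : (2*(m2:ℤ)) ∣ (b + m2) ↔ (2*(m2:ℤ)) ∣ (b - m2) := by
    constructor <;> intro h
    · have := dvd_sub h (dvd_refl (2*(m2:ℤ)))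
      rwa [show b + (m2:ℤ) - 2*m2 = b - m2 by ring] at this
    · have := dvd_add h (dvd_refl (2*(m2:ℤ)))
      rwa [show b - (m2:ℤ) + 2*m2 = b + m2 by ring] at this
  have hnot : ¬ ((2*(m1:ℤ)) ∣ a ∧ (2*(m1:ℤ)) ∣ (a - m1)) := by
    rintro ⟨h1, h2⟩
    have : (2*(m1:ℤ)) ∣ (m1:ℤ) := by
      have := dvd_sub h1 h2
      simpa using this
    have := Int.le_of_dvd (by exact_mod_cast hm1) this
    omega
  apply mul_left_cancel₀ (two_ne_zero' ℂ)
  rw [key2]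
  by_cases c1 : (2*(m1:ℤ)) ∣ a ∧ (2*(m2:ℤ)) ∣ b
  · have h3 : ¬ (2*(m1:ℤ)) ∣ (a + m1) := fun h => hnot ⟨c1.1, hd1.mp h⟩
    rw [if_pos (Or.inl c1), if_pos c1.1, if_pos c1.2, if_neg h3]
    push_cast; ring
  · by_cases c2 : (2*(m1:ℤ)) ∣ (a - m1) ∧ (2*(m2:ℤ)) ∣ (b - m2)
    · have h3 : ¬ (2*(m1:ℤ)) ∣ a := fun h => hnot ⟨h, c2.1⟩
      rw [if_pos (Or.inr c2), if_neg h3, if_pos (hd1.mpr c2.1), if_pos (hd2.mpr c2.2)]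
      push_cast; ring
    · rw [if_neg (not_or.mpr ⟨c1, c2⟩)]
      have hz1 : ((if (2*(m1:ℤ)) ∣ a then ((2*m1:ℕ):ℂ) else 0) *
          (if (2*(m2:ℤ)) ∣ b then ((2*m2:ℕ):ℂ) else 0)) = 0 := by
        rcases not_and_or.mp c1 with h | h <;> simp [h]
      have hz2 : ((if (2*(m1:ℤ)) ∣ (a + m1) then ((2*m1:ℕ):ℂ) else 0) *
          (if (2*(m2:ℤ)) ∣ (b + m2) then ((2*m2:ℕ):ℂ) else 0)) = 0 := by
        rcases not_and_or.mp c2 with h | h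
        · have : ¬ (2*(m1:ℤ)) ∣ (a + m1) := fun hh => h (hd1.mp hh)
          simp [this]
        · have : ¬ (2*(m2:ℤ)) ∣ (b + m2) := fun hh => h (hd2.mp hh)
          simp [this]
      rw [hz1, hz2]
      ring

noncomputable def sval (b : ℤ) : ℂ := if Even b then 1 else -1

lemma Ee_mul (m1 m2 : ℕ) (hm1 : 0 < m1) (hm2 : 0 < m2) (a b c d : ℤ) (p : ℕ × ℕ) :
    Ee m1 m2 a b p * Ee m1 m2 c d p = Ee m1 m2 (a+c) (b+d) p := by
  have hm1' : (m1:ℂ) ≠ 0 := by exact_mod_cast hm1.ne'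
  have hm2' : (m2:ℂ) ≠ 0 := by exact_mod_cast hm2.ne'
  rw [Ee, Ee, Ee, show ∀ a₁ a₂ b₁ b₂ : ℂ, a₁ * b₁ * (a₂ * b₂) = (a₁ * a₂) * (b₁ * b₂) from by intros; ring,
    ← Complex.exp_add, ← Complex.exp_add]
  congr 2 <;> (push_cast; field_simp)

lemma Ee_conj (m1 m2 : ℕ) (a b : ℤ) (p : ℕ × ℕ) :
    (starRingEnd ℂ) (Ee m1 m2 a b p) = Ee m1 m2 (-a) (-b) p := by
  simp only [Ee, map_mul, ← Complex.exp_conj]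
  congr 2 <;>
  · simp only [map_div₀, map_mul, Complex.conj_I, Complex.conj_ofReal, map_natCast, map_intCast]
    push_cast
    ring

lemma X_expand (m1 m2 : ℕ) (hm1 : 0 < m1) (hm2 : 0 < m2) (γ : ℤ × ℤ) (p : ℕ × ℕ) :
    Xbasis γ (p.1 * π / m1) (p.2 * π / m2) =
      (Ee m1 m2 γ.1 γ.2 p + sval γ.2 * Ee m1 m2 (-γ.1) γ.2 p) / 2 := by
  have hm1' : (m1:ℂ) ≠ 0 := by exact_mod_cast hm1.ne'
  have hm2' : (m2:ℂ) ≠ 0 := by exact_mod_cast hm2.ne'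
  set x : ℝ := (γ.1 : ℝ) * ((p.1 : ℝ) * π / m1) with hx
  set φr : ℝ := (p.2 : ℝ) * π / m2 with hφr
  have h1 : Complex.exp ((x:ℂ) * Complex.I) * Complex.exp (Complex.I * γ.2 * (φr:ℂ)) =
      Ee m1 m2 γ.1 γ.2 p := by
    rw [Ee, ← Complex.exp_add, ← Complex.exp_add]
    congr 1
    rw [hx, hφr]
    push_cast
    field_simp
  have h2 : Complex.exp (-(x:ℂ) * Complex.I) * Complex.exp (Complex.I * γ.2 * (φr:ℂ)) =
      Ee m1 m2 (-γ.1) γ.2 p := by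
    rw [Ee, ← Complex.exp_add, ← Complex.exp_add]
    congr 1
    rw [hx, hφr]
    push_cast
    field_simp
  unfold Xbasis sval
  by_cases h : Even γ.2
  · rw [if_pos h, if_pos h]
    have hc : (Real.cos x : ℂ) =
        (Complex.exp ((x:ℂ) * Complex.I) + Complex.exp (-(x:ℂ) * Complex.I)) / 2 := by
      rw [Complex.ofReal_cos, eq_div_iff (two_ne_zero' ℂ), mul_comm, Complex.two_cos]
    rw [hc, div_mul_eq_mul_div, add_mul, h1, h2]
    ring
  · rw [if_neg h, if_neg h]
    have hs : (Real.sin x : ℂ) =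
        (Complex.exp (-(x:ℂ) * Complex.I) - Complex.exp ((x:ℂ) * Complex.I)) * Complex.I / 2 := by
      rw [Complex.ofReal_sin, eq_div_iff (two_ne_zero' ℂ), mul_comm (Complex.sin _), Complex.two_sin]
    rw [hs]
    rw [show Complex.I * ((Complex.exp (-(x:ℂ) * Complex.I) - Complex.exp ((x:ℂ) * Complex.I)) *
        Complex.I / 2) * Complex.exp (Complex.I * γ.2 * (φr:ℂ)) =
        (Complex.I * Complex.I) * ((Complex.exp (-(x:ℂ) * Complex.I) -
        Complex.exp ((x:ℂ) * Complex.I)) * Complex.exp (Complex.I * γ.2 * (φr:ℂ))) / 2 by ring,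
      Complex.I_mul_I, sub_mul, h1, h2]
    ring

lemma conj_X_mul (m1 m2 : ℕ) (hm1 : 0 < m1) (hm2 : 0 < m2) (γ γ' : ℤ × ℤ) (p : ℕ × ℕ) :
    (starRingEnd ℂ) (Xbasis γ (p.1 * π / m1) (p.2 * π / m2)) *
      Xbasis γ' (p.1 * π / m1) (p.2 * π / m2) =
    (Ee m1 m2 (-γ.1 + γ'.1) (-γ.2 + γ'.2) p
      + sval γ'.2 * Ee m1 m2 (-γ.1 + -γ'.1) (-γ.2 + γ'.2) p
      + sval γ.2 * Ee m1 m2 (γ.1 + γ'.1) (-γ.2 + γ'.2) p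
      + sval γ.2 * sval γ'.2 * Ee m1 m2 (γ.1 + -γ'.1) (-γ.2 + γ'.2) p) / 4 := by
  have hconj_s : ∀ b : ℤ, (starRingEnd ℂ) (sval b) = sval b := by
    intro b; unfold sval; split <;> simp
  rw [X_expand m1 m2 hm1 hm2 γ p, X_expand m1 m2 hm1 hm2 γ' p]
  rw [map_div₀, map_add, map_mul, hconj_s, Ee_conj, Ee_conj]
  simp only [neg_neg, map_ofNat]
  rw [show ∀ A B C D s s' : ℂ, (A + s*B)/2 * ((C + s'*D)/2)
      = (A*C + s'*(A*D) + s*(B*C) + s*s'*(B*D))/4 from by intros; ring]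
  rw [Ee_mul m1 m2 hm1 hm2 (-γ.1) (-γ.2) γ'.1 γ'.2 p,
    Ee_mul m1 m2 hm1 hm2 (-γ.1) (-γ.2) (-γ'.1) γ'.2 p,
    Ee_mul m1 m2 hm1 hm2 γ.1 (-γ.2) γ'.1 γ'.2 p,
    Ee_mul m1 m2 hm1 hm2 γ.1 (-γ.2) (-γ'.1) γ'.2 p]

lemma int_dvd_zero_of {d x : ℤ} (hd : 0 < d) (hdvd : d ∣ x) (hlo : -d < x) (hhi : x < d) :
    x = 0 := by
  obtain ⟨k, rfl⟩ := hdvd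
  have h1 : -1 < k := by
    have : d * (-1) < d * k := by linarith
    exact (mul_lt_mul_iff_right₀ hd).mp this
  have h2 : k < 1 := by
    have : d * k < d * 1 := by linarith
    exact (mul_lt_mul_iff_right₀ hd).mp this
  have : k = 0 := by omega
  simp [this]

lemma int_dvd_cases5 {d x : ℤ} (hd : 0 < d) (hdvd : d ∣ x) (hlo : -2*d ≤ x) (hhi : x ≤ 2*d) :
    x = -2*d ∨ x = -d ∨ x = 0 ∨ x = d ∨ x = 2*d := by
  obtain ⟨k, rfl⟩ := hdvd
  have h1 : -2 ≤ k := by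
    by_contra h
    push_neg at h
    have : d * k ≤ d * (-3) := mul_le_mul_of_nonneg_left (by omega) hd.le
    linarith
  have h2 : k ≤ 2 := by
    by_contra h
    push_neg at h
    have : d * 3 ≤ d * k := mul_le_mul_of_nonneg_left (by omega) hd.le
    linarith
  interval_cases k
  · left; ring
  · right; left; ring
  · right; right; left; ring
  · right; right; right; left; ring
  · right; right; right; right; ring

lemma Gamma_facts {m1 m2 : ℕ} (hm1 : 0 < m1) (hm2 : 0 < m2) {γ : ℤ × ℤ}
    (h : γ ∈ GammaSet m1 m2) :
    0 ≤ γ.1 ∧ γ.1 ≤ m1 ∧ |γ.2| < m2 ∧ ((m2:ℤ)*γ.1 + m1*|γ.2| ≤ m1*m2) ∧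
      (γ.1 = m1 → γ.2 = 0) ∧ (γ.1 = 0 → Even γ.2) ∧
      ((m2:ℤ)*γ.1 + m1*γ.2 = m1*m2 → γ.2 = 0) := by
  simp only [GammaSet, Finset.mem_filter, Finset.mem_product, Finset.mem_Icc] at h
  obtain ⟨⟨⟨h01, h1m⟩, _, _⟩, hbr, hex⟩ := h
  have hm1' : (0:ℤ) < m1 := by exact_mod_cast hm1
  have hm2' : (0:ℤ) < m2 := by exact_mod_cast hm2
  have habs : |γ.2| < m2 ∧ (m2:ℤ)*γ.1 + m1*|γ.2| ≤ m1*m2 := by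
    rcases hbr with ⟨hg1, hineq⟩ | ⟨hz, _, hlt⟩
    · refine ⟨?_, hineq⟩
      nlinarith [abs_nonneg γ.2]
    · refine ⟨hlt, ?_⟩
      rw [hz]
      nlinarith [abs_nonneg γ.2]
  refine ⟨h01, h1m, habs.1, habs.2, ?_, ?_, ?_⟩
  · intro he
    have h2 := habs.2
    rw [he] at h2
    have h3 : |γ.2| ≤ 0 := by nlinarith
    exact abs_eq_zero.mp (le_antisymm h3 (abs_nonneg γ.2))
  · intro h0
    rcases hbr with ⟨hg1, _⟩ | ⟨_, he, _⟩
    · rw [h0] at hg1; omega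
    · exact he
  · intro heq
    by_contra hne
    exact hex ⟨heq, hne⟩

noncomputable def dval (m1 m2 : ℕ) (γ : ℤ × ℤ) : ℂ :=
  if γ.1 = 0 ∨ γ.1 = (m1:ℤ) then ((2*m1*m2 : ℕ) : ℂ) else ((m1*m2 : ℕ) : ℂ)

lemma dval_ne_zero (m1 m2 : ℕ) (hm1 : 0 < m1) (hm2 : 0 < m2) (γ : ℤ × ℤ) :
    dval m1 m2 γ ≠ 0 := by
  unfold dval
  split <;> (rw [Nat.cast_ne_zero]; positivity)

lemma gram (m1 m2 : ℕ) (hm1 : 0 < m1) (hm2 : 0 < m2) (γ γ' : ℤ × ℤ)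
    (hγ : γ ∈ GammaSet m1 m2) (hγ' : γ' ∈ GammaSet m1 m2) :
    ∑ p ∈ gridL m1 m2,
      (starRingEnd ℂ) (Xbasis γ (p.1 * π / m1) (p.2 * π / m2)) *
        Xbasis γ' (p.1 * π / m1) (p.2 * π / m2)
    = if γ = γ' then dval m1 m2 γ else 0 := by
  obtain ⟨hA1, hA2, hB, hIneq, hM, hZ, hX⟩ := Gamma_facts hm1 hm2 hγ
  obtain ⟨hA1', hA2', hB', hIneq', hM', hZ', hX'⟩ := Gamma_facts hm1 hm2 hγ'
  have hm1z : (0:ℤ) < m1 := by exact_mod_cast hm1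
  have hm2z : (0:ℤ) < m2 := by exact_mod_cast hm2
  have habsγ := abs_lt.mp hB
  have habsγ' := abs_lt.mp hB'
  rw [Finset.sum_congr rfl (fun p _ => conj_X_mul m1 m2 hm1 hm2 γ γ' p)]
  simp only [← Finset.sum_div, Finset.sum_add_distrib, ← Finset.mul_sum]
  rw [sum_gridL m1 m2 hm1 hm2, sum_gridL m1 m2 hm1 hm2, sum_gridL m1 m2 hm1 hm2,
    sum_gridL m1 m2 hm1 hm2]
  by_cases hgg : γ = γ'
  · subst hgg
    rw [if_pos rfl]
    rw [show -γ.2 + γ.2 = 0 from by ring, show -γ.1 + γ.1 = 0 from by ring,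
      show γ.1 + -γ.1 = 0 from by ring]
    rw [if_pos (Or.inl ⟨dvd_zero _, dvd_zero _⟩)]
    have hbshift : ¬ (2*(m2:ℤ)) ∣ ((0:ℤ) - m2) := by
      intro h
      have := int_dvd_zero_of (show (0:ℤ) < 2*m2 by linarith) h (by linarith) (by linarith)
      omega
    by_cases hb : γ.1 = 0 ∨ γ.1 = (m1:ℤ)
    · have hev : Even γ.2 := by
        rcases hb with h | h
        · exact hZ h
        · rw [hM h]; exact Even.zero
      have hs : sval γ.2 = 1 := by unfold sval; rw [if_pos hev]
      have hdvd2 : (2*(m1:ℤ)) ∣ (-γ.1 + -γ.1) := by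
        rcases hb with h | h
        · exact ⟨0, by rw [h]; ring⟩
        · exact ⟨-1, by rw [h]; ring⟩
      have hdvd3 : (2*(m1:ℤ)) ∣ (γ.1 + γ.1) := by
        rcases hb with h | h
        · exact ⟨0, by rw [h]; ring⟩
        · exact ⟨1, by rw [h]; ring⟩
      rw [if_pos (Or.inl ⟨hdvd2, dvd_zero _⟩), if_pos (Or.inl ⟨hdvd3, dvd_zero _⟩), hs]
      unfold dval
      rw [if_pos hb]
      push_cast
      ring
    · have hnd3 : ¬ (2*(m1:ℤ)) ∣ (γ.1 + γ.1) := by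
        intro h
        rcases int_dvd_cases5 (show (0:ℤ) < 2*m1 by linarith) h (by linarith) (by linarith)
          with h' | h' | h' | h' | h' <;> [omega; omega; exact hb (Or.inl (by omega));
            omega; exact hb (Or.inr (by omega))]
      have hnd2 : ¬ (2*(m1:ℤ)) ∣ (-γ.1 + -γ.1) := by
        intro h
        apply hnd3
        have : -(-γ.1 + -γ.1) = γ.1 + γ.1 := by ring
        exact this ▸ (dvd_neg.mpr h)
      rw [if_neg (by rintro (⟨h, _⟩ | ⟨_, h⟩); exact hnd2 h; exact hbshift h),
        if_neg (by rintro (⟨h, _⟩ | ⟨_, h⟩); exact hnd3 h; exact hbshift h)]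
      have ssq : sval γ.2 * sval γ.2 = 1 := by unfold sval; split <;> norm_num
      rw [ssq]
      unfold dval
      rw [if_neg hb]
      push_cast
      ring
  · rw [if_neg hgg]
    have hne : ¬ (γ.1 = γ'.1 ∧ γ.2 = γ'.2) := by
      rintro ⟨h1, h2⟩
      exact hgg (Prod.ext h1 h2)
    have hb0dvd : (2*(m2:ℤ)) ∣ (-γ.2 + γ'.2) → γ.2 = γ'.2 := by
      intro h
      have := int_dvd_zero_of (show (0:ℤ) < 2*m2 by linarith) h (by linarith) (by linarith)
      omega
    have hbm2 : (2*(m2:ℤ)) ∣ (-γ.2 + γ'.2 - m2) →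
        (-γ.2 + γ'.2 = m2 ∨ -γ.2 + γ'.2 = -m2) := by
      intro h
      rcases int_dvd_cases5 (show (0:ℤ) < 2*m2 by linarith) h (by linarith) (by linarith)
        with h' | h' | h' | h' | h' <;> omega
    have hard : ∀ hsum1 : γ.1 + γ'.1 = (m1:ℤ),
        ¬ (2*(m2:ℤ)) ∣ (-γ.2 + γ'.2 - m2) := by
      intro hsum1 hdvd
      have hb := hbm2 hdvd
      have e1 : (m2:ℤ)*γ.1 + m2*γ'.1 = m2*m1 := by rw [← mul_add, hsum1]
      have e2 : (m2:ℤ) ≤ |γ.2| + |γ'.2| := by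
        have h3 : |(-γ.2 + γ'.2)| ≤ |γ.2| + |γ'.2| := by
          calc |(-γ.2 + γ'.2)| ≤ |(-γ.2)| + |γ'.2| := abs_add_le _ _
          _ = |γ.2| + |γ'.2| := by rw [abs_neg]
        rcases hb with h' | h' <;> rw [h'] at h3 <;> simp [abs_of_nonneg hm2z.le, abs_of_nonpos] at h3 <;> linarith [h3]
      have e3 : (m1:ℤ)*m2 ≤ m1*|γ.2| + m1*|γ'.2| := by nlinarith
      have eA : (m2:ℤ)*γ.1 + m1*|γ.2| = m1*m2 := by linarith
      have eB : (m2:ℤ)*γ'.1 + m1*|γ'.2| = m1*m2 := by linarith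
      have eS : |γ.2| + |γ'.2| = m2 := by
        have : (m1:ℤ)*(|γ.2| + |γ'.2|) = m1*m2 := by linarith [eA, eB, e1]
        exact mul_left_cancel₀ hm1z.ne' this
      rcases lt_trichotomy γ.2 0 with hneg | hzero | hpos
      · rcases lt_trichotomy γ'.2 0 with hneg' | hzero' | hpos'
        · rw [abs_of_neg hneg, abs_of_neg hneg'] at eS
          omega
        · rw [hzero', abs_of_neg hneg] at eS
          simp at eS
          omega
        · have : γ'.2 = 0 := hX' (by rw [abs_of_pos hpos'] at eB; linarith)
          omega
      · rw [hzero] at eS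
        simp at eS
        omega
      · have : γ.2 = 0 := hX (by rw [abs_of_pos hpos] at eA; linarith)
        omega
    have hC1 : ¬ (((2*(m1:ℤ)) ∣ (-γ.1 + γ'.1) ∧ (2*(m2:ℤ)) ∣ (-γ.2 + γ'.2)) ∨
        ((2*(m1:ℤ)) ∣ (-γ.1 + γ'.1 - m1) ∧ (2*(m2:ℤ)) ∣ (-γ.2 + γ'.2 - m2))) := by
      rintro (⟨ha, hbb⟩ | ⟨ha, hbb⟩)
      · have ha0 : -γ.1 + γ'.1 = 0 :=
          int_dvd_zero_of (show (0:ℤ) < 2*m1 by linarith) ha (by linarith) (by linarith)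
        exact hne ⟨by omega, hb0dvd hbb⟩
      · rcases int_dvd_cases5 (show (0:ℤ) < 2*m1 by linarith) ha (by linarith) (by linarith)
          with h' | h' | h' | h' | h'
        · -- -γ.1 + γ'.1 - m1 = -2m1 : γ.1 = m1, γ'.1 = 0  (γ.1 - γ'.1 = m1)
          have hg1 : γ.1 = (m1:ℤ) := by omega
          have hz2 : γ.2 = 0 := hM hg1
          rcases hbm2 hbb with h'' | h'' <;> omega
        · omega
        · -- -γ.1 + γ'.1 = m1 : γ'.1 = m1, γ.1 = 0
          have hg1' : γ'.1 = (m1:ℤ) := by omega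
          have hz2' : γ'.2 = 0 := hM' hg1'
          rcases hbm2 hbb with h'' | h'' <;> omega
        · omega
        · omega
    have hC4 : ¬ (((2*(m1:ℤ)) ∣ (γ.1 + -γ'.1) ∧ (2*(m2:ℤ)) ∣ (-γ.2 + γ'.2)) ∨
        ((2*(m1:ℤ)) ∣ (γ.1 + -γ'.1 - m1) ∧ (2*(m2:ℤ)) ∣ (-γ.2 + γ'.2 - m2))) := by
      rintro (⟨ha, hbb⟩ | ⟨ha, hbb⟩)
      · have ha0 : γ.1 + -γ'.1 = 0 :=
          int_dvd_zero_of (show (0:ℤ) < 2*m1 by linarith) ha (by linarith) (by linarith)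
        exact hne ⟨by omega, hb0dvd hbb⟩
      · rcases int_dvd_cases5 (show (0:ℤ) < 2*m1 by linarith) ha (by linarith) (by linarith)
          with h' | h' | h' | h' | h'
        · have hg1' : γ'.1 = (m1:ℤ) := by omega
          have hz2' : γ'.2 = 0 := hM' hg1'
          rcases hbm2 hbb with h'' | h'' <;> omega
        · omega
        · have hg1 : γ.1 = (m1:ℤ) := by omega
          have hz2 : γ.2 = 0 := hM hg1
          rcases hbm2 hbb with h'' | h'' <;> omega
        · omega
        · omega
    have hC2 : ¬ (((2*(m1:ℤ)) ∣ (-γ.1 + -γ'.1) ∧ (2*(m2:ℤ)) ∣ (-γ.2 + γ'.2)) ∨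
        ((2*(m1:ℤ)) ∣ (-γ.1 + -γ'.1 - m1) ∧ (2*(m2:ℤ)) ∣ (-γ.2 + γ'.2 - m2))) := by
      rintro (⟨ha, hbb⟩ | ⟨ha, hbb⟩)
      · rcases int_dvd_cases5 (show (0:ℤ) < 2*m1 by linarith) ha (by linarith) (by linarith)
          with h' | h' | h' | h' | h'
        · -- γ.1 + γ'.1 = 2m1 : both = m1
          have hg1 : γ.1 = (m1:ℤ) := by omega
          have hg1' : γ'.1 = (m1:ℤ) := by omega
          exact hne ⟨by omega, by rw [hM hg1, hM' hg1']⟩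
        · omega
        · -- both zero
          exact hne ⟨by omega, hb0dvd hbb⟩
        · omega
        · omega
      · rcases int_dvd_cases5 (show (0:ℤ) < 2*m1 by linarith) ha
          (by linarith) (by linarith) with h' | h' | h' | h' | h'
        · exact hard (by omega) hbb
        · omega
        · omega
        · omega
        · omega
    have hC3 : ¬ (((2*(m1:ℤ)) ∣ (γ.1 + γ'.1) ∧ (2*(m2:ℤ)) ∣ (-γ.2 + γ'.2)) ∨
        ((2*(m1:ℤ)) ∣ (γ.1 + γ'.1 - m1) ∧ (2*(m2:ℤ)) ∣ (-γ.2 + γ'.2 - m2))) := by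
      rintro (⟨ha, hbb⟩ | ⟨ha, hbb⟩)
      · rcases int_dvd_cases5 (show (0:ℤ) < 2*m1 by linarith) ha (by linarith) (by linarith)
          with h' | h' | h' | h' | h'
        · omega
        · omega
        · exact hne ⟨by omega, hb0dvd hbb⟩
        · omega
        · have hg1 : γ.1 = (m1:ℤ) := by omega
          have hg1' : γ'.1 = (m1:ℤ) := by omega
          exact hne ⟨by omega, by rw [hM hg1, hM' hg1']⟩
      · rcases int_dvd_cases5 (show (0:ℤ) < 2*m1 by linarith) ha
          (by linarith) (by linarith) with h' | h' | h' | h' | h'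
        · omega
        · omega
        · exact hard (by omega) hbb
        · omega
        · omega
    rw [if_neg hC1, if_neg hC2, if_neg hC3, if_neg hC4]
    ring

lemma X_invariance (m1 m2 : ℕ) (hm1 : 0 < m1) (hm2 : 0 < m2) (γ : ℤ × ℤ) (p q : ℕ × ℕ)
    (h1 : p.1 + q.1 = 2*m1 ∨ (p.1 = 0 ∧ q.1 = 0))
    (h2 : q.2 = p.2 + m2 ∨ p.2 = q.2 + m2) :
    Xbasis γ (q.1 * π / m1) (q.2 * π / m2) = Xbasis γ (p.1 * π / m1) (p.2 * π / m2) := by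
  have hm1' : (m1:ℝ) ≠ 0 := by exact_mod_cast hm1.ne'
  have hm2' : (m2:ℝ) ≠ 0 := by exact_mod_cast hm2.ne'
  have hcos : Real.cos (γ.1 * ((q.1:ℝ) * π / m1)) = Real.cos (γ.1 * ((p.1:ℝ) * π / m1)) := by
    rcases h1 with h | ⟨ha, hb⟩
    · have hq : (q.1 : ℝ) = 2*(m1:ℝ) - p.1 := by
        have h' : ((p.1:ℝ)) + q.1 = 2*(m1:ℝ) := by exact_mod_cast h
        linarith
      rw [show (γ.1:ℝ) * ((q.1:ℝ)*π/m1) = (γ.1:ℝ)*(2*π) - (γ.1:ℝ)*((p.1:ℝ)*π/m1) by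
        rw [hq]; field_simp]
      exact Real.cos_int_mul_two_pi_sub _ γ.1
    · rw [ha, hb]
  have hsin : Real.sin (γ.1 * ((q.1:ℝ) * π / m1)) = -Real.sin (γ.1 * ((p.1:ℝ) * π / m1)) := by
    rcases h1 with h | ⟨ha, hb⟩
    · have hq : (q.1 : ℝ) = 2*(m1:ℝ) - p.1 := by
        have h' : ((p.1:ℝ)) + q.1 = 2*(m1:ℝ) := by exact_mod_cast h
        linarith
      rw [show (γ.1:ℝ) * ((q.1:ℝ)*π/m1) = (γ.1:ℝ)*(2*π) - (γ.1:ℝ)*((p.1:ℝ)*π/m1) by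
        rw [hq]; field_simp]
      exact Real.sin_int_mul_two_pi_sub _ γ.1
    · rw [ha, hb]
      norm_num
  have hsvalsq : sval γ.2 * sval γ.2 = 1 := by unfold sval; split <;> norm_num
  have hshift : ∀ r s : ℕ, s = r + m2 →
      Complex.exp (Complex.I * γ.2 * ((s:ℝ) * π / m2 : ℝ)) =
        sval γ.2 * Complex.exp (Complex.I * γ.2 * ((r:ℝ) * π / m2 : ℝ)) := by
    intro r s hs
    have hsr : ((s:ℝ)) = (r:ℝ) + m2 := by exact_mod_cast hs
    have harg : (Complex.I * γ.2 * (((s:ℝ) * π / m2 : ℝ) : ℂ)) =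
        Complex.I * γ.2 * (((r:ℝ) * π / m2 : ℝ) : ℂ) + γ.2 * (π * Complex.I) := by
      push_cast [hsr]
      have : (m2:ℂ) ≠ 0 := by exact_mod_cast hm2.ne'
      field_simp
    rw [harg, Complex.exp_add]
    rw [show ((γ.2:ℂ) * (π * Complex.I)) = (γ.2:ℤ) * (π * Complex.I) by norm_cast]
    rw [Complex.exp_int_mul, Complex.exp_pi_mul_I]
    have : ((-1:ℂ)) ^ (γ.2 : ℤ) = sval γ.2 := by
      unfold sval
      by_cases h : Even γ.2
      · rw [if_pos h, Even.neg_one_zpow h]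
      · rw [if_neg h, Odd.neg_one_zpow (Int.not_even_iff_odd.mp h)]
    rw [this]
    ring
  have hexp : Complex.exp (Complex.I * γ.2 * ((q.2:ℝ) * π / m2 : ℝ)) =
      sval γ.2 * Complex.exp (Complex.I * γ.2 * ((p.2:ℝ) * π / m2 : ℝ)) := by
    rcases h2 with h | h
    · exact hshift p.2 q.2 h
    · have := hshift q.2 p.2 h
      rw [this]
      rw [← mul_assoc, hsvalsq, one_mul]
  unfold Xbasis
  by_cases h : Even γ.2
  · rw [if_pos h, if_pos h]
    have hs1 : sval γ.2 = 1 := by unfold sval; rw [if_pos h]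
    rw [hcos, hexp, hs1]
    push_cast
    ring
  · rw [if_neg h, if_neg h]
    have hs1 : sval γ.2 = -1 := by unfold sval; rw [if_neg h]
    rw [hsin, hexp, hs1]
    push_cast
    ring

lemma mem_indexSet_iff (m1 m2 : ℕ) (i : ℕ × ℕ) :
    i ∈ indexSet m1 m2 ↔
      i.1 < m1 + 1 ∧ i.2 < 2*m2 ∧ ((i.1 = 0 ∨ i.1 = m1) → i.2 < m2) ∧ (i.1 + i.2) % 2 = 0 := by
  simp [indexSet, Finset.mem_filter, Finset.mem_product, Finset.mem_range, Nat.even_iff,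
    and_assoc]

lemma coverage (m1 m2 : ℕ) (hm1 : 0 < m1) (hm2 : 0 < m2) (heven : Even m2)
    (p : ℕ × ℕ) (hp : p ∈ gridL m1 m2) :
    ∃ q ∈ indexSet m1 m2, ∀ γ : ℤ × ℤ,
      Xbasis γ (p.1 * π / m1) (p.2 * π / m2) = Xbasis γ (q.1 * π / m1) (q.2 * π / m2) := by
  simp only [gridL, Finset.mem_filter, Finset.mem_product, Finset.mem_range] at hp
  obtain ⟨⟨hp1, hp2⟩, hpar⟩ := hp
  rw [Nat.even_iff] at hpar
  obtain ⟨m2', hm2'⟩ := heven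
  by_cases hpI : p ∈ indexSet m1 m2
  · exact ⟨p, hpI, fun γ => rfl⟩
  · rw [mem_indexSet_iff] at hpI
    by_cases h0 : p.1 = 0
    · have hge : m2 ≤ p.2 := by omega
      refine ⟨(0, p.2 - m2), ?_, fun γ => (X_invariance m1 m2 hm1 hm2 γ p (0, p.2 - m2)
        (Or.inr ⟨h0, rfl⟩) (Or.inr (by simp; omega))).symm⟩
      rw [mem_indexSet_iff]
      simp only
      omega
    · by_cases hsm : p.1 ≤ m1
      · have hkey : p.1 = m1 ∧ m2 ≤ p.2 := by omega
        refine ⟨(m1, p.2 - m2), ?_, fun γ => (X_invariance m1 m2 hm1 hm2 γ p (m1, p.2 - m2)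
          (Or.inl (by simp; omega)) (Or.inr (by simp; omega))).symm⟩
        rw [mem_indexSet_iff]
        simp only
        omega
      · by_cases hlt : p.2 < m2
        · refine ⟨(2*m1 - p.1, p.2 + m2), ?_, fun γ =>
            (X_invariance m1 m2 hm1 hm2 γ p (2*m1 - p.1, p.2 + m2)
              (Or.inl (by simp; omega)) (Or.inl (by simp))).symm⟩
          rw [mem_indexSet_iff]
          simp only
          omega
        · refine ⟨(2*m1 - p.1, p.2 - m2), ?_, fun γ =>
            (X_invariance m1 m2 hm1 hm2 γ p (2*m1 - p.1, p.2 - m2)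
              (Or.inl (by simp; omega)) (Or.inr (by simp; omega))).symm⟩
          rw [mem_indexSet_iff]
          simp only
          omega

lemma count_parity (n r : ℕ) : ((Finset.range (2*n)).filter (fun b => b % 2 = r)).card = 
    if r < 2 then n else 0 := by
  induction n with
  | zero => simp
  | succ k ih =>
      rw [show 2*(k+1) = (2*k)+1+1 by ring, Finset.range_add_one, Finset.range_add_one,
        Finset.filter_insert, Finset.filter_insert]
      by_cases hr : r < 2
      · rw [if_pos hr] at ih ⊢
        rcases (by omega : r = 0 ∨ r = 1) with h | h
        · subst h
          rw [if_neg (by omega), if_pos (by omega),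
            Finset.card_insert_of_notMem (by simp only [Finset.mem_filter, Finset.mem_range]; omega), ih]
        · subst h
          rw [if_pos (by omega), if_neg (by omega),
            Finset.card_insert_of_notMem (by simp only [Finset.mem_filter, Finset.mem_range]; omega), ih]
      · rw [if_neg hr] at ih ⊢
        rw [if_neg (by omega), if_neg (by omega), ih]

lemma card_indexSet (m1 m2 : ℕ) (hm1 : 0 < m1) (hm2 : 0 < m2) (heven : Even m2) :
    (indexSet m1 m2).card = m1 * m2 := by
  obtain ⟨m2', hm2'⟩ := heven
  rw [indexSet, Finset.card_filter, Finset.sum_product]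
  have hrow : ∀ a : ℕ, (∑ b ∈ Finset.range (2*m2),
      if (((a = 0 ∨ a = m1) → b < m2) ∧ Even (a + b)) then 1 else 0) =
      if (a = 0 ∨ a = m1) then m2' else m2 := by
    intro a
    rw [← Finset.card_filter]
    by_cases ha : a = 0 ∨ a = m1
    · rw [if_pos ha]
      have he : (Finset.range (2*m2)).filter (fun b => ((a = 0 ∨ a = m1) → b < m2) ∧ Even (a + b))
          = (Finset.range (2*m2')).filter (fun b => b % 2 = (a + 2) % 2) := by
        ext b
        simp only [Finset.mem_filter, Finset.mem_range, Nat.even_iff]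
        constructor
        · rintro ⟨hb, hc, hd⟩
          have := hc ha
          omega
        · rintro ⟨hb, hc⟩
          refine ⟨by omega, fun _ => by omega, by omega⟩
      rw [he, count_parity]
      rw [if_pos (by omega)]
    · rw [if_neg ha]
      have he : (Finset.range (2*m2)).filter (fun b => ((a = 0 ∨ a = m1) → b < m2) ∧ Even (a + b))
          = (Finset.range (2*m2)).filter (fun b => b % 2 = (a + 2) % 2) := by
        ext b
        simp only [Finset.mem_filter, Finset.mem_range, Nat.even_iff]
        constructor
        · rintro ⟨hb, _, hd⟩
          omega
        · rintro ⟨hb, hc⟩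
          exact ⟨hb, fun h => absurd h ha, by omega⟩
      rw [he, count_parity]
      rw [if_pos (by omega)]
  rw [Finset.sum_congr rfl (fun a _ => hrow a)]
  rw [Finset.sum_range_succ]
  rw [if_pos (Or.inr rfl)]
  have hmid : ∀ a ∈ Finset.range m1, (if (a = 0 ∨ a = m1) then m2' else m2)
      = if a = 0 then m2' else m2 := by
    intro a ha
    simp only [Finset.mem_range] at ha
    by_cases h : a = 0
    · simp [h]
    · rw [if_neg (by omega), if_neg h]
  rw [Finset.sum_congr rfl hmid]
  obtain ⟨k, hk⟩ : ∃ k, m1 = k + 1 := ⟨m1 - 1, by omega⟩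
  rw [hk, Finset.sum_range_succ']
  simp only [Nat.succ_ne_zero, if_false, if_true, Finset.sum_const, smul_eq_mul, if_pos rfl,
    Finset.card_range]
  rw [hm2']
  ring

noncomputable def gammaRow (m1 m2 : ℕ) (x : ℤ) : Finset ℤ :=
  (Finset.Icc (-(m2:ℤ)) m2).filter
    (fun y => ((1 ≤ x ∧ (m2 : ℤ) * x + (m1 : ℤ) * |y| ≤ m1 * m2) ∨
        (x = 0 ∧ Even y ∧ |y| < (m2 : ℤ))) ∧
      ¬((m2 : ℤ) * x + (m1 : ℤ) * y = m1 * m2 ∧ y ≠ 0))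

lemma mem_gammaRow {m1 m2 : ℕ} {x z : ℤ} :
    z ∈ gammaRow m1 m2 x ↔ ((-(m2:ℤ) ≤ z ∧ z ≤ m2) ∧
      ((1 ≤ x ∧ (m2 : ℤ) * x + (m1 : ℤ) * |z| ≤ m1 * m2) ∨
        (x = 0 ∧ Even z ∧ |z| < (m2 : ℤ))) ∧
      ¬((m2 : ℤ) * x + (m1 : ℤ) * z = m1 * m2 ∧ z ≠ 0)) := by
  rw [gammaRow, Finset.mem_filter, Finset.mem_Icc]

lemma card_GammaSet (m1 m2 : ℕ) (hm1 : 0 < m1) (hm2 : 0 < m2) (heven : Even m2) :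
    (GammaSet m1 m2).card = m1 * m2 := by
  obtain ⟨m2', hm2'⟩ := heven
  have hm1z : (0:ℤ) < m1 := by exact_mod_cast hm1
  have hm2z : (0:ℤ) < m2 := by exact_mod_cast hm2
  have hm1ne : (m1:ℤ) ≠ 0 := hm1z.ne'
  have hm2c : (m2:ℤ) = m2' + m2' := by exact_mod_cast hm2'
  have hA : (GammaSet m1 m2).card = ∑ x ∈ Finset.Icc (0:ℤ) (m1:ℤ), (gammaRow m1 m2 x).card := by
    rw [GammaSet, Finset.card_filter, Finset.sum_product]
    refine Finset.sum_congr rfl (fun x _ => ?_)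
    rw [gammaRow, Finset.card_filter]
  have hg0 : (((gammaRow m1 m2 0).card : ℕ) : ℤ) = (m2:ℤ) - 1 := by
    have him : gammaRow m1 m2 0 = (Finset.Icc (1-(m2':ℤ)) ((m2':ℤ)-1)).image (fun y => 2*y) := by
      ext z
      rw [mem_gammaRow, Finset.mem_image]
      constructor
      · rintro ⟨⟨hz1, hz2⟩, hbr, _⟩
        rcases hbr with ⟨h1le, _⟩ | ⟨_, hev, habs⟩
        · exact absurd h1le (by norm_num)
        · rw [abs_lt] at habs
          rw [Int.even_iff] at hev
          exact ⟨z / 2, by rw [Finset.mem_Icc]; omega, by omega⟩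
      · rintro ⟨y, hy, rfl⟩
        rw [Finset.mem_Icc] at hy
        have habs : |2*y| < (m2:ℤ) := by rw [abs_lt]; omega
        refine ⟨⟨by omega, by omega⟩, Or.inr ⟨rfl, ⟨y, by ring⟩, habs⟩, ?_⟩
        rintro ⟨heq, hne⟩
        have h2 : (m1:ℤ) * (2*y) = m1 * m2 := by linarith
        have := mul_left_cancel₀ hm1ne h2
        omega
    have hinj : Function.Injective (fun y : ℤ => 2*y) := by
      intro a b h
      dsimp at h
      omega
    rw [him, Finset.card_image_of_injective _ hinj, Int.card_Icc]
    omega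
  have hgm : (((gammaRow m1 m2 (m1:ℤ)).card : ℕ) : ℤ) = 1 := by
    have hsing : gammaRow m1 m2 (m1:ℤ) = {0} := by
      ext z
      rw [mem_gammaRow, Finset.mem_singleton]
      constructor
      · rintro ⟨⟨hz1, hz2⟩, hbr, hex⟩
        rcases hbr with ⟨_, hineq⟩ | ⟨hz0, _, _⟩
        · have hcm : (m2:ℤ)*m1 = m1*m2 := mul_comm _ _
          have h1 : (m1:ℤ) * |z| ≤ 0 := by linarith
          have h2 : 0 ≤ (m1:ℤ) * |z| := mul_nonneg hm1z.le (abs_nonneg z)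
          have h3 : (m1:ℤ) * |z| = 0 := le_antisymm h1 h2
          rcases mul_eq_zero.mp h3 with h | h
          · exact absurd h hm1ne
          · exact abs_eq_zero.mp h
        · omega
      · rintro rfl
        refine ⟨⟨by omega, by omega⟩, Or.inl ⟨by exact_mod_cast hm1, by
          rw [abs_zero, mul_zero, add_zero, mul_comm]⟩, ?_⟩
        rintro ⟨_, hne⟩
        exact hne rfl
    rw [hsing, Finset.card_singleton]
    rfl
  have hmid : ∀ x : ℤ, 1 ≤ x → x ≤ (m1:ℤ) - 1 →
      (((gammaRow m1 m2 x).card : ℕ) : ℤ) = 2*((m2*((m1:ℤ) - x))/m1) + 1 -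
        (if (m1:ℤ) ∣ m2*((m1:ℤ)-x) then 1 else 0) := by
    intro x hx1 hx2
    have hKpos : 0 < (m2:ℤ)*((m1:ℤ) - x) := mul_pos hm2z (by omega)
    set K : ℤ := (m2:ℤ)*((m1:ℤ) - x) with hKdef
    set N : ℤ := K / m1 with hNdef
    have hN0 : 0 ≤ N := Int.ediv_nonneg hKpos.le hm1z.le
    have hNlt : N < m2 := by
      rw [hNdef, Int.ediv_lt_iff_lt_mul hm1z]
      nlinarith
    have hbr_iff : ∀ z : ℤ, ((1 ≤ x ∧ (m2:ℤ)*x + m1*|z| ≤ m1*m2) ∨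
        (x = 0 ∧ Even z ∧ |z| < m2)) ↔ |z| ≤ N := by
      intro z
      constructor
      · rintro (⟨_, h⟩ | ⟨h0, _, _⟩)
        · rw [hNdef, Int.le_ediv_iff_mul_le hm1z]
          nlinarith
        · omega
      · intro h
        left
        refine ⟨hx1, ?_⟩
        rw [hNdef, Int.le_ediv_iff_mul_le hm1z] at h
        nlinarith
    have hex_iff : ∀ z : ℤ, ((m2:ℤ)*x + m1*z = m1*m2 ∧ z ≠ 0) ↔ ((m1:ℤ) ∣ K ∧ z = N) := by
      intro z
      constructor
      · rintro ⟨heq, hne⟩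
        have hmz : (m1:ℤ)*z = K := by rw [hKdef]; linear_combination heq
        have hdvd : (m1:ℤ) ∣ K := ⟨z, hmz.symm⟩
        have hNz : N = z := by rw [hNdef, ← hmz, Int.mul_ediv_cancel_left _ hm1ne]
        exact ⟨hdvd, hNz.symm⟩
      · rintro ⟨hdvd, rfl⟩
        have hNz : (m1:ℤ)*N = K := Int.mul_ediv_cancel' hdvd
        constructor
        · rw [hKdef] at hNz
          linear_combination hNz
        · intro h0
          rw [h0, mul_zero] at hNz
          omega
    by_cases hdvd : (m1:ℤ) ∣ K
    · rw [if_pos hdvd]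
      have heq : gammaRow m1 m2 x = Finset.Icc (-N) (N-1) := by
        ext z
        rw [mem_gammaRow, Finset.mem_Icc]
        constructor
        · rintro ⟨⟨hz1, hz2⟩, hbr, hex⟩
          have h1 := abs_le.mp ((hbr_iff z).mp hbr)
          have hzN : z ≠ N := fun hh => hex ((hex_iff z).mpr ⟨hdvd, hh⟩)
          omega
        · rintro ⟨h1, h2⟩
          have habs : |z| ≤ N := abs_le.mpr ⟨by omega, by omega⟩
          refine ⟨⟨by omega, by omega⟩, (hbr_iff z).mpr habs, fun hh => ?_⟩
          have := ((hex_iff z).mp hh).2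
          omega
      rw [heq, Int.card_Icc]
      omega
    · rw [if_neg hdvd]
      have heq : gammaRow m1 m2 x = Finset.Icc (-N) N := by
        ext z
        rw [mem_gammaRow, Finset.mem_Icc]
        constructor
        · rintro ⟨⟨hz1, hz2⟩, hbr, hex⟩
          have h1 := abs_le.mp ((hbr_iff z).mp hbr)
          omega
        · rintro ⟨h1, h2⟩
          have habs : |z| ≤ N := abs_le.mpr ⟨by omega, by omega⟩
          refine ⟨⟨by omega, by omega⟩, (hbr_iff z).mpr habs, fun hh => ?_⟩
          exact hdvd ((hex_iff z).mp hh).1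
      rw [heq, Int.card_Icc]
      omega
  have hpair : ∀ x : ℤ, 1 ≤ x → x ≤ (m1:ℤ) - 1 →
      (((gammaRow m1 m2 x).card : ℕ) : ℤ) + (((gammaRow m1 m2 ((m1:ℤ) - x)).card : ℕ) : ℤ)
        = 2*m2 := by
    intro x hx1 hx2
    rw [hmid x hx1 hx2, hmid ((m1:ℤ) - x) (by omega) (by omega)]
    rw [show (m1:ℤ) - ((m1:ℤ) - x) = x by ring]
    have hdd : ((m1:ℤ) ∣ m2*((m1:ℤ)-x)) ↔ ((m1:ℤ) ∣ m2*x) := by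
      constructor <;> intro h
      · have h2 : (m1:ℤ) ∣ ((m1:ℤ)*m2 - m2*((m1:ℤ)-x)) := dvd_sub ⟨m2, rfl⟩ h
        have h3 : (m1:ℤ)*m2 - m2*((m1:ℤ)-x) = m2*x := by ring
        rwa [h3] at h2
      · have h2 : (m1:ℤ) ∣ ((m1:ℤ)*m2 - m2*x) := dvd_sub ⟨m2, rfl⟩ h
        have h3 : (m1:ℤ)*m2 - m2*x = m2*((m1:ℤ)-x) := by ring
        rwa [h3] at h2
    have hq := Int.mul_ediv_add_emod ((m2:ℤ)*x) m1
    set q : ℤ := ((m2:ℤ)*x) / m1 with hqdef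
    set r : ℤ := ((m2:ℤ)*x) % m1 with hrdef
    have hr0 : 0 ≤ r := Int.emod_nonneg _ hm1ne
    have hrlt : r < m1 := Int.emod_lt_of_pos _ hm1z
    have hdvd_iff : ((m1:ℤ) ∣ m2*x) ↔ r = 0 := by
      rw [hrdef]
      exact ⟨fun h => Int.emod_eq_zero_of_dvd h, fun h => Int.dvd_of_emod_eq_zero h⟩
    by_cases hr : r = 0
    · rw [if_pos (hdd.mpr (hdvd_iff.mpr hr)), if_pos (hdvd_iff.mpr hr)]
      have h2 : (m2:ℤ)*((m1:ℤ)-x) = (m1:ℤ)*((m2:ℤ) - q) := by linear_combination hq - hr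
      rw [h2, Int.mul_ediv_cancel_left _ hm1ne]
      omega
    · rw [if_neg (fun h => hr (hdvd_iff.mp (hdd.mp h))), if_neg (fun h => hr (hdvd_iff.mp h))]
      have h2 : (m2:ℤ)*((m1:ℤ)-x) = ((m1:ℤ) - r) + (m1:ℤ)*((m2:ℤ) - q - 1) := by
        linear_combination hq
      rw [h2, Int.add_mul_ediv_left _ _ hm1ne,
        Int.ediv_eq_zero_of_lt (by omega) (by omega)]
      omega
  -- assemble
  have hsplit : Finset.Icc (0:ℤ) (m1:ℤ) = insert 0 (insert (m1:ℤ)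
      (Finset.Icc (1:ℤ) ((m1:ℤ)-1))) := by
    ext z
    simp only [Finset.mem_insert, Finset.mem_Icc]
    omega
  have hTz : (((∑ x ∈ Finset.Icc (1:ℤ) ((m1:ℤ)-1), (gammaRow m1 m2 x).card : ℕ)) : ℤ)
      = ((m1:ℤ)-1)*m2 := by
    have hrefl : ∑ x ∈ Finset.Icc (1:ℤ) ((m1:ℤ)-1), ((gammaRow m1 m2 x).card : ℤ)
        = ∑ x ∈ Finset.Icc (1:ℤ) ((m1:ℤ)-1), ((gammaRow m1 m2 ((m1:ℤ) - x)).card : ℤ) := by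
      apply Finset.sum_nbij' (i := fun x => (m1:ℤ) - x) (j := fun x => (m1:ℤ) - x)
      · intro a ha; rw [Finset.mem_Icc] at *; omega
      · intro a ha; rw [Finset.mem_Icc] at *; omega
      · intro a _; ring
      · intro a _; ring
      · intro a ha
        rw [show (m1:ℤ) - ((m1:ℤ) - a) = a by ring]
    have h2T : 2 * (∑ x ∈ Finset.Icc (1:ℤ) ((m1:ℤ)-1), ((gammaRow m1 m2 x).card : ℤ))
        = ∑ x ∈ Finset.Icc (1:ℤ) ((m1:ℤ)-1), (2*(m2:ℤ)) := by
      rw [two_mul]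
      nth_rewrite 2 [hrefl]
      rw [← Finset.sum_add_distrib]
      refine Finset.sum_congr rfl (fun x hx => ?_)
      rw [Finset.mem_Icc] at hx
      exact hpair x hx.1 hx.2
    rw [Finset.sum_const, Int.card_Icc] at h2T
    push_cast
    have hthis : ((m1:ℤ) - 1 + 1 - 1).toNat = m1 - 1 := by omega
    rw [hthis, nsmul_eq_mul] at h2T
    have hcast : (((m1 - 1 : ℕ)) : ℤ) = (m1:ℤ) - 1 := by omega
    rw [hcast] at h2T
    linarith
  rw [hA, hsplit, Finset.sum_insert (by simp only [Finset.mem_insert, Finset.mem_Icc]; omega),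
    Finset.sum_insert (by simp only [Finset.mem_Icc]; omega)]
  have hgoal : ((((gammaRow m1 m2 0).card + ((gammaRow m1 m2 (m1:ℤ)).card +
      ∑ x ∈ Finset.Icc (1:ℤ) ((m1:ℤ)-1), (gammaRow m1 m2 x).card) : ℕ)) : ℤ)
      = ((m1*m2 : ℕ) : ℤ) := by
    push_cast at hg0 hgm hTz ⊢
    rw [hg0, hgm]
    push_cast
    linarith [hTz]
  exact_mod_cast hgoal

/-- Unique solvability of the interpolation problem in the span of
the basis functions X_γ, γ ∈ Γ(m). -/
theorem stmt15 (m1 m2 : ℕ) (hm1 : 0 < m1) (hm2 : 0 < m2) (heven : Even m2)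
    (f : ℕ × ℕ → ℂ) :
    ∃! c : ℤ × ℤ → ℂ, (∀ γ ∉ GammaSet m1 m2, c γ = 0) ∧
      ∀ i ∈ indexSet m1 m2,
        (∑ γ ∈ GammaSet m1 m2, c γ * Xbasis γ (i.1 * π / m1) (i.2 * π / m2)) =
          f i := by
  classical
  set Γ := GammaSet m1 m2 with hΓ
  set I := indexSet m1 m2 with hI
  -- the matrix of the interpolation problem
  set M : Matrix ↥I ↥Γ ℂ :=
    fun i γ => Xbasis γ.1 ((i:ℕ×ℕ).1 * π / m1) ((i:ℕ×ℕ).2 * π / m2) with hM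
  set T : (↥Γ → ℂ) →ₗ[ℂ] (↥I → ℂ) := M.mulVecLin with hT
  have hTapp : ∀ (v : ↥Γ → ℂ) (i : ↥I), T v i =
      ∑ γ ∈ Γ.attach, M i γ * v γ := by
    intro v i
    rfl
  -- key: kernel is trivial
  have hker : ∀ v : ↥Γ → ℂ, T v = 0 → v = 0 := by
    intro v hv
    have hgrid : ∀ p ∈ gridL m1 m2,
        ∑ γ ∈ Γ.attach, v γ * Xbasis γ.1 (p.1 * π / m1) (p.2 * π / m2) = 0 := by
      intro p hp
      obtain ⟨q, hq, hXeq⟩ := coverage m1 m2 hm1 hm2 heven p hp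
      have h1 : ∑ γ ∈ Γ.attach, v γ * Xbasis γ.1 (p.1 * π / m1) (p.2 * π / m2)
          = ∑ γ ∈ Γ.attach, M ⟨q, hq⟩ γ * v γ := by
        refine Finset.sum_congr rfl (fun γ _ => ?_)
        rw [hXeq γ.1, hM]
        ring
      rw [h1, ← hTapp v ⟨q, hq⟩, hv]
      rfl
    funext γ0
    have hswap : ∑ γ ∈ Γ.attach, v γ * (∑ p ∈ gridL m1 m2,
        (starRingEnd ℂ) (Xbasis γ0.1 (p.1 * π / m1) (p.2 * π / m2)) *
          Xbasis γ.1 (p.1 * π / m1) (p.2 * π / m2)) = 0 := by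
      have h2 : ∑ p ∈ gridL m1 m2,
          (starRingEnd ℂ) (Xbasis γ0.1 (p.1 * π / m1) (p.2 * π / m2)) *
            (∑ γ ∈ Γ.attach, v γ * Xbasis γ.1 (p.1 * π / m1) (p.2 * π / m2)) = 0 := by
        refine Finset.sum_eq_zero (fun p hp => ?_)
        rw [hgrid p hp, mul_zero]
      rw [← h2]
      simp only [Finset.mul_sum]
      rw [Finset.sum_comm]
      exact Finset.sum_congr rfl (fun p _ => Finset.sum_congr rfl (fun γ _ => by ring))
    have h3 : ∀ γ ∈ Γ.attach, v γ * (∑ p ∈ gridL m1 m2,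
        (starRingEnd ℂ) (Xbasis γ0.1 (p.1 * π / m1) (p.2 * π / m2)) *
          Xbasis γ.1 (p.1 * π / m1) (p.2 * π / m2))
        = if γ = γ0 then v γ0 * dval m1 m2 γ0.1 else 0 := by
      intro γ _
      rw [gram m1 m2 hm1 hm2 γ0.1 γ.1 γ0.2 γ.2]
      by_cases h : γ = γ0
      · subst h
        rw [if_pos rfl, if_pos rfl]
      · rw [if_neg (fun hh => h (Subtype.ext hh.symm)), if_neg h, mul_zero]
    rw [Finset.sum_congr rfl h3, Finset.sum_ite_eq' Γ.attach γ0] at hswap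
    rw [if_pos (Finset.mem_attach _ _)] at hswap
    have := mul_eq_zero.mp hswap
    rcases this with h | h
    · exact h
    · exact absurd h (dval_ne_zero m1 m2 hm1 hm2 γ0.1)
  have hinj : Function.Injective T := by
    intro a b hab
    have : T (a - b) = 0 := by rw [map_sub, hab, sub_self]
    have := hker _ this
    exact sub_eq_zero.mp this
  -- surjectivity via dimension count
  have hcard : Fintype.card ↥Γ = Fintype.card ↥I := by
    rw [Fintype.card_coe, Fintype.card_coe, hΓ, hI,
      card_GammaSet m1 m2 hm1 hm2 heven, card_indexSet m1 m2 hm1 hm2 heven]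
  have hsurj : Function.Surjective T := by
    set e : ↥Γ ≃ ↥I := Fintype.equivOfCardEq hcard with he
    set φe : (↥I → ℂ) ≃ₗ[ℂ] (↥Γ → ℂ) := LinearEquiv.funCongrLeft ℂ ℂ e with hφe
    set F : (↥I → ℂ) →ₗ[ℂ] (↥I → ℂ) := T.comp φe.toLinearMap with hF
    have hFinj : Function.Injective F := by
      intro a b hab
      exact φe.injective (hinj hab)
    have hFsurj : Function.Surjective F :=
      LinearMap.surjective_of_injective hFinj
    intro w
    obtain ⟨u, hu⟩ := hFsurj w
    exact ⟨φe u, hu⟩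
  -- build the interpolant
  obtain ⟨cΓ, hcΓ⟩ := hsurj (fun i => f i.1)
  set c : ℤ × ℤ → ℂ := fun γ => if h : γ ∈ Γ then cΓ ⟨γ, h⟩ else 0 with hc
  have hrestr : ∀ (d : ℤ × ℤ → ℂ) (i : ↥I),
      (∑ γ ∈ Γ, d γ * Xbasis γ ((i:ℕ×ℕ).1 * π / m1) ((i:ℕ×ℕ).2 * π / m2))
        = T (fun γ : ↥Γ => d γ.1) i := by
    intro d i
    rw [hTapp]
    rw [← Finset.sum_attach Γ (fun γ => d γ * Xbasis γ ((i:ℕ×ℕ).1 * π / m1) ((i:ℕ×ℕ).2 * π / m2))]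
    refine Finset.sum_congr rfl (fun γ _ => ?_)
    rw [hM]
    ring
  refine ⟨c, ⟨?_, ?_⟩, ?_⟩
  · intro γ hγ
    simp only [hc]
    exact dif_neg hγ
  · intro i hi
    have h1 := hrestr c ⟨i, hi⟩
    have h2 : (fun γ : ↥Γ => c γ.1) = cΓ := by
      funext γ
      simp only [hc]
      rw [dif_pos γ.2]
    rw [h2] at h1
    rw [h1, hcΓ]
  · rintro d ⟨hd0, hdint⟩
    have hTd : T (fun γ : ↥Γ => d γ.1) = (fun i => f i.1) := by
      funext i
      rw [← hrestr d i, hdint i.1 i.2]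
    have h2 : (fun γ : ↥Γ => c γ.1) = cΓ := by
      funext γ
      simp only [hc]
      rw [dif_pos γ.2]
    have hTc : T (fun γ : ↥Γ => c γ.1) = (fun i => f i.1) := by rw [h2, hcΓ]
    have heq : (fun γ : ↥Γ => d γ.1) = (fun γ : ↥Γ => c γ.1) := by
      apply hinj
      rw [hTd, hTc]
    funext γ
    by_cases hγ : γ ∈ Γ
    · have := congrFun heq ⟨γ, hγ⟩
      simpa using this
    · rw [hd0 γ hγ]
      simp only [hc]
      rw [dif_neg hγ]
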